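/- In the random model with B-irreducible probability matrices, the push-sum algorithm achieves average consensus almost surely: for every x(0) ∈ ℝⁿ and every i ∈ [n], almost surely lim_{t→∞} z_i(t) = x̄. -/

import Mathlib

open Finset MeasureTheory

/-- `A_{S S̄} = ∑_{i ∈ S, j ∉ S} A i j`. -/
def flowSum {n : ℕ} (A : Matrix (Fin n) (Fin n) ℝ) (S : Finset (Fin n)) : ℝ :=
  ∑ i ∈ S, ∑ j ∈ Sᶜ, A i j

/-- `S` is a nontrivial subset of `[n]`. -/
def NontrivialSubset {n : ℕ} (S : Finset (Fin n)) : Prop :=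
  S.Nonempty ∧ S ≠ Finset.univ

/-- Directed infinite flow property: for every nontrivial `S`, `∑_t A_{S S̄}(t) = ∞`. -/
def DirectedInfiniteFlow {n : ℕ} (A : ℕ → Matrix (Fin n) (Fin n) ℝ) : Prop :=
  ∀ S : Finset (Fin n), NontrivialSubset S →
    Filter.Tendsto (fun T => ∑ t ∈ Finset.range T, flowSum (A t) S)
      Filter.atTop Filter.atTop

/-- The backward product `A(t:s) = A(t) A(t-1) ⋯ A(s)`. -/
def matProd {n : ℕ} (A : ℕ → Matrix (Fin n) (Fin n) ℝ) (t s : ℕ) :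
    Matrix (Fin n) (Fin n) ℝ :=
  (((List.range (t + 1 - s)).map fun k => A (t - k))).prod

/-- Row-stochastic nonnegative matrix. -/
def RowStochastic {n : ℕ} (A : Matrix (Fin n) (Fin n) ℝ) : Prop :=
  (∀ i j, 0 ≤ A i j) ∧ ∀ i, ∑ j, A i j = 1

/-- Column-stochastic nonnegative matrix. -/
def ColStochastic {n : ℕ} (A : Matrix (Fin n) (Fin n) ℝ) : Prop :=
  (∀ i j, 0 ≤ A i j) ∧ ∀ j, ∑ i, A i j = 1

/-- `W` is the degree-normalized adjacency matrix of a digraph with all self-loops: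
`W i j = 1 / (out-degree of j)` if there is an edge from `j` to `i`, else `0`. -/
def OutDegreeForm {n : ℕ} (W : Matrix (Fin n) (Fin n) ℝ) : Prop :=
  ∃ N : Fin n → Finset (Fin n), (∀ j, j ∈ N j) ∧
    ∀ i j, W i j = if i ∈ N j then (1 : ℝ) / (N j).card else 0

/-- Strong aperiodicity of a sequence of matrices. -/
def StronglyAperiodic {n : ℕ} (A : ℕ → Matrix (Fin n) (Fin n) ℝ) : Prop :=
  ∃ γ : ℝ, 0 < γ ∧ ∀ t i, γ ≤ A t i i

/-- The times `k_q`: `k_0 = 0` and `k_q` is the least `t' > k_{q-1}` with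
nonzero flow `∑_{t=k_{q-1}}^{t'-1} A_{S S̄}(t) > 0` across every nontrivial cut. -/
noncomputable def kSeq {n : ℕ} (A : ℕ → Matrix (Fin n) (Fin n) ℝ) : ℕ → ℕ
  | 0 => 0
  | q + 1 => sInf {t' : ℕ | kSeq A q < t' ∧ ∀ S : Finset (Fin n), NontrivialSubset S →
      0 < ∑ t ∈ Finset.Ico (kSeq A q) t', flowSum (A t) S}

/-- `ℓ_q = k_{qn} - k_{(q-1)n}`. -/
noncomputable def ellSeq {n : ℕ} (A : ℕ → Matrix (Fin n) (Fin n) ℝ) (q : ℕ) : ℕ :=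
  kSeq A (q * n) - kSeq A ((q - 1) * n)

/-- The index set `Q_{t,s} = {q ≥ 1 : s ≤ k_{(q-1)n}, k_{qn} ≤ t}` (as a `Finset`). -/
noncomputable def QSet {n : ℕ} (A : ℕ → Matrix (Fin n) (Fin n) ℝ) (t s : ℕ) :
    Finset ℕ :=
  (Finset.Icc 1 t).filter fun q => s ≤ kSeq A ((q - 1) * n) ∧ kSeq A (q * n) ≤ t

/-- `Λ_{t,s} = ∏_{q ∈ Q_{t,s}} (1 - 1/n^{ℓ_q})`. -/
noncomputable def Lam {n : ℕ} (A : ℕ → Matrix (Fin n) (Fin n) ℝ) (t s : ℕ) : ℝ :=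
  ∏ q ∈ QSet A t s, (1 - 1 / (n : ℝ) ^ (ellSeq A q))

/-- Push-sum iterates: `u(0) = u0`, `u(t+1) = W(t) u(t)`. -/
def pushIter {n : ℕ} (W : ℕ → Matrix (Fin n) (Fin n) ℝ) (u0 : Fin n → ℝ) : ℕ → Fin n → ℝ
  | 0 => u0
  | t + 1 => (W t).mulVec (pushIter W u0 t)

/-- A nonnegative matrix is irreducible if the digraph with an edge from `j` to `i`
whenever `A i j > 0` is strongly connected. -/
def IrreducibleMat {n : ℕ} (A : Matrix (Fin n) (Fin n) ℝ) : Prop :=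
  ∀ i j : Fin n, Relation.ReflTransGen (fun a b => 0 < A b a) i j


namespace PSAux

variable {n : ℕ}

lemma pushIter_succ (W : ℕ → Matrix (Fin n) (Fin n) ℝ) (u0 : Fin n → ℝ) (t : ℕ) :
    pushIter W u0 (t+1) = (W t).mulVec (pushIter W u0 t) := rfl

lemma mulVec_apply (A : Matrix (Fin n) (Fin n) ℝ) (v : Fin n → ℝ) (i : Fin n) :
    A.mulVec v i = ∑ j, A i j * v j := rfl

lemma mulVec_nonneg {A : Matrix (Fin n) (Fin n) ℝ} {v : Fin n → ℝ}
    (hA : ∀ i j, 0 ≤ A i j) (hv : ∀ j, 0 ≤ v j) : ∀ i, 0 ≤ A.mulVec v i := by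
  intro i
  rw [mulVec_apply]
  exact Finset.sum_nonneg fun j _ => mul_nonneg (hA i j) (hv j)

lemma sum_mulVec {A : Matrix (Fin n) (Fin n) ℝ} {v : Fin n → ℝ}
    (hA : ∀ j, ∑ i, A i j = 1) : ∑ i, A.mulVec v i = ∑ j, v j := by
  simp only [mulVec_apply]
  rw [Finset.sum_comm]
  refine Finset.sum_congr rfl fun j _ => ?_
  rw [← Finset.sum_mul, hA j, one_mul]

lemma sum_pushIter {W : ℕ → Matrix (Fin n) (Fin n) ℝ} {u0 : Fin n → ℝ}
    (hW : ∀ t j, ∑ i, W t i j = 1) (t : ℕ) :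
    ∑ i, pushIter W u0 t i = ∑ i, u0 i := by
  induction t with
  | zero => rfl
  | succ t ih => rw [pushIter_succ, sum_mulVec (hW t), ih]

lemma pushIter_nonneg {W : ℕ → Matrix (Fin n) (Fin n) ℝ} {u0 : Fin n → ℝ}
    (hW : ∀ t i j, 0 ≤ W t i j) (hu : ∀ i, 0 ≤ u0 i) :
    ∀ t i, 0 ≤ pushIter W u0 t i := by
  intro t
  induction t with
  | zero => exact hu
  | succ t ih => exact mulVec_nonneg (hW t) ih

lemma pushIter_pos {W : ℕ → Matrix (Fin n) (Fin n) ℝ} {u0 : Fin n → ℝ}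
    (hW : ∀ t i j, 0 ≤ W t i j) (hWd : ∀ t j, 0 < W t j j) (hu : ∀ i, 0 < u0 i) :
    ∀ t i, 0 < pushIter W u0 t i := by
  intro t
  induction t with
  | zero => exact hu
  | succ t ih =>
    intro i
    rw [pushIter_succ, mulVec_apply]
    have h1 : W t i i * pushIter W u0 t i ≤ ∑ j, W t i j * pushIter W u0 t j :=
      Finset.single_le_sum (f := fun j => W t i j * pushIter W u0 t j)
        (fun j _ => mul_nonneg (hW t i j) (ih j).le) (Finset.mem_univ i)
    exact lt_of_lt_of_le (mul_pos (hWd t i) (ih i)) h1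

end PSAux

/-- Reachability at local step `d` from `j` starting at time `s`. -/
def ReachP {n : ℕ} (W : ℕ → Matrix (Fin n) (Fin n) ℝ) (s : ℕ) (j : Fin n) :
    ℕ → Fin n → Prop
  | 0 => fun b => b = j
  | d + 1 => fun b => ∃ a, ReachP W s j d a ∧ W (s + d) b a ≠ 0

namespace PSAux

variable {n : ℕ} {W : ℕ → Matrix (Fin n) (Fin n) ℝ} {s : ℕ} {j : Fin n}

lemma reachP_path {L : ℕ} {i : Fin n} (h : ReachP W s j L i) :
    ∃ p : ℕ → Fin n, p s = j ∧ p (s + L) = i ∧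
      ∀ d < L, W (s + d) (p (s + d + 1)) (p (s + d)) ≠ 0 := by
  induction L generalizing i with
  | zero =>
    exact ⟨fun _ => j, rfl, by simpa using h.symm, fun d hd => absurd hd (Nat.not_lt_zero d)⟩
  | succ L ih =>
    obtain ⟨a, ha, hedge⟩ := h
    obtain ⟨p, hps, hpL, hpe⟩ := ih ha
    refine ⟨fun r => if r ≤ s + L then p r else i, ?_, ?_, ?_⟩
    · show (if s ≤ s + L then p s else i) = j
      rw [if_pos (Nat.le_add_right s L)]; exact hps
    · show (if s + (L + 1) ≤ s + L then p (s + (L + 1)) else i) = i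
      rw [if_neg (by omega)]
    · intro d hd
      rcases Nat.lt_succ_iff_lt_or_eq.mp hd with hd' | rfl
      · have h1 : s + d + 1 ≤ s + L := by omega
        have h2 : s + d ≤ s + L := by omega
        simpa [h1, h2] using hpe d hd'
      · have h1 : ¬ (s + d + 1 ≤ s + d) := by omega
        simpa [h1, hpL] using hedge

lemma reachP_mono {d : ℕ} {b : Fin n} (hdiag : W (s + d) b b ≠ 0)
    (h : ReachP W s j d b) : ReachP W s j (d + 1) b :=
  ⟨b, h, hdiag⟩

lemma reachP_mono' (hdiag : ∀ t b, W t b b ≠ 0) {d d' : ℕ} (hdd : d ≤ d') {b : Fin n}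
    (h : ReachP W s j d b) : ReachP W s j d' b := by
  induction d' with
  | zero => simpa [Nat.le_zero.mp hdd] using h
  | succ d' ih =>
    rcases Nat.le_succ_iff.mp hdd with h' | rfl
    · exact reachP_mono (hdiag _ _) (ih h')
    · exact h

lemma crossing {A : Matrix (Fin n) (Fin n) ℝ} (hA : IrreducibleMat A)
    {S : Finset (Fin n)} (hne : S.Nonempty) (hproper : S ≠ Finset.univ) :
    ∃ a ∈ S, ∃ b, b ∉ S ∧ 0 < A b a := by
  obtain ⟨a0, ha0⟩ := hne
  have : ∃ i0, i0 ∉ S := by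
    by_contra h
    push_neg at h
    exact hproper (Finset.eq_univ_iff_forall.mpr h)
  obtain ⟨i0, hi0⟩ := this
  suffices h : ∀ x, Relation.ReflTransGen (fun a b => 0 < A b a) x i0 →
      x ∈ S → ∃ a ∈ S, ∃ b, b ∉ S ∧ 0 < A b a by
    exact h a0 (hA a0 i0) ha0
  intro x hx
  induction hx using Relation.ReflTransGen.head_induction_on with
  | refl => exact fun h => absurd h hi0
  | head hxy _ ih =>
    rename_i u v _
    intro hu
    by_cases hv : v ∈ S
    · exact ih hv
    · exact ⟨u, hu, v, hv, hxy⟩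

lemma reach_univ
    (hn : 2 ≤ n) {B : ℕ} (hB : 1 ≤ B)
    {P : ℕ → Matrix (Fin n) (Fin n) ℝ}
    (hPnn : ∀ t i j, 0 ≤ P t i j)
    (hPirr : ∀ w : ℕ, IrreducibleMat (∑ t' ∈ Finset.Ico (w * B) ((w + 1) * B), P t'))
    (hdiag : ∀ t b, W t b b ≠ 0)
    {m : ℕ}
    (hedge : ∀ t, m * (n * B) ≤ t → t < (m + 1) * (n * B) →
      ∀ i j, P t i j ≠ 0 → W t i j ≠ 0)
    (j : Fin n) : ∀ i, ReachP W (m * (n * B)) j (n * B) i := by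
  classical
  set s := m * (n * B) with hs
  set RS : ℕ → Finset (Fin n) := fun d => Finset.univ.filter (fun b => ReachP W s j d b)
    with hRS
  have hmono : ∀ {d d' : ℕ}, d ≤ d' → RS d ⊆ RS d' := by
    intro d d' hdd
    intro b hb
    simp only [hRS, Finset.mem_filter, Finset.mem_univ, true_and] at hb ⊢
    exact reachP_mono' hdiag hdd hb
  have claim : ∀ k, k ≤ n → RS (k * B) = Finset.univ ∨ k + 1 ≤ (RS (k * B)).card := by
    intro k
    induction k with
    | zero =>
      intro _
      right
      have hj : j ∈ RS 0 := by
        simp only [hRS, Finset.mem_filter, Finset.mem_univ, true_and]; exact rfl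
      simpa using Finset.card_pos.mpr ⟨j, by simpa using hj⟩
    | succ k ih =>
      intro hk1
      have hk : k ≤ n := Nat.le_of_succ_le hk1
      rcases ih hk with huniv | hcard
      · left
        have h2 := hmono (show k * B ≤ (k + 1) * B by nlinarith)
        rw [huniv] at h2
        exact Finset.univ_subset_iff.mp h2
      by_cases huniv : RS (k * B) = Finset.univ
      · left
        have h2 := hmono (show k * B ≤ (k + 1) * B by nlinarith)
        rw [huniv] at h2
        exact Finset.univ_subset_iff.mp h2
      · -- find a crossing edge out of RS (k*B)
        have hne : (RS (k * B)).Nonempty := Finset.card_pos.mp (by omega)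
        obtain ⟨a, ha, b, hb, hpos⟩ := crossing (hPirr (m * n + k)) hne huniv
        -- extract a time t' in the window with P t' b a ≠ 0
        have hsum : (0:ℝ) < ∑ t' ∈ Finset.Ico ((m * n + k) * B) ((m * n + k + 1) * B),
            P t' b a := by
          have := hpos
          rwa [Matrix.sum_apply] at this
        have hex : ∃ t' ∈ Finset.Ico ((m * n + k) * B) ((m * n + k + 1) * B),
            P t' b a ≠ 0 := by
          by_contra h
          push_neg at h
          rw [Finset.sum_eq_zero h] at hsum
          exact lt_irrefl 0 hsum
        obtain ⟨t', ht', hPt'⟩ := hex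
        rw [Finset.mem_Ico] at ht'
        have harith1 : (m * n + k) * B = s + k * B := by rw [hs]; ring
        have harith2 : (m * n + k + 1) * B = s + (k + 1) * B := by rw [hs]; ring
        have hts : s + k * B ≤ t' := by omega
        have htub : t' < s + (k + 1) * B := by omega
        have htub2 : t' < (m + 1) * (n * B) := by
          have : (k + 1) * B ≤ n * B := Nat.mul_le_mul_right B hk1
          have : s + (k + 1) * B ≤ (m + 1) * (n * B) := by rw [hs]; nlinarith
          omega
        have hW : W t' b a ≠ 0 := hedge t' (by omega) htub2 b a hPt'
        -- a is reachable at local time t' - s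
        have haR : ReachP W s j (k * B) a := by
          simpa [hRS] using ha
        have haR' : ReachP W s j (t' - s) a :=
          reachP_mono' hdiag (by omega) haR
        have hbR : ReachP W s j (t' - s + 1) b := by
          refine ⟨a, haR', ?_⟩
          have : s + (t' - s) = t' := by omega
          rw [this]; exact hW
        have hbR' : ReachP W s j ((k + 1) * B) b :=
          reachP_mono' hdiag (by omega) hbR
        right
        have hsub : insert b (RS (k * B)) ⊆ RS ((k + 1) * B) := by
          intro c hc
          rcases Finset.mem_insert.mp hc with rfl | hc
          · simp only [hRS, Finset.mem_filter, Finset.mem_univ, true_and]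
            exact hbR'
          · exact hmono (by nlinarith) hc
        have := Finset.card_le_card hsub
        rw [Finset.card_insert_of_notMem hb] at this
        omega
  rcases claim n le_rfl with huniv | hcard
  · intro i
    have : i ∈ RS (n * B) := huniv ▸ Finset.mem_univ i
    simpa [hRS] using this
  · exfalso
    have := Finset.card_le_univ (RS (n * B))
    simp only [Finset.card_univ, Fintype.card_fin] at this
    omega

lemma window_lower_bound
    {W : ℕ → Matrix (Fin n) (Fin n) ℝ}
    (hW0 : ∀ t i j, 0 ≤ W t i j)
    (hWlb : ∀ t i j, W t i j ≠ 0 → ((n:ℝ))⁻¹ ≤ W t i j)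
    (v : ℕ → Fin n → ℝ)
    (hv : ∀ r, v (r + 1) = (W r).mulVec (v r))
    (s L : ℕ) (hvnn : ∀ i, 0 ≤ v s i)
    {i j : Fin n}
    (hp : ∃ p : ℕ → Fin n, p s = j ∧ p (s + L) = i ∧
      ∀ d < L, W (s + d) (p (s + d + 1)) (p (s + d)) ≠ 0) :
    ((n:ℝ)⁻¹) ^ L * v s j ≤ v (s + L) i := by
  have hnn : ∀ d i', 0 ≤ v (s + d) i' := by
    intro d
    induction d with
    | zero => exact hvnn
    | succ d ih =>
      rw [show s + (d + 1) = (s + d) + 1 by omega, hv (s + d)]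
      exact mulVec_nonneg (hW0 (s + d)) ih
  obtain ⟨p, hps, hpL, hpe⟩ := hp
  have key : ∀ d, d ≤ L → ((n:ℝ)⁻¹) ^ d * v s j ≤ v (s + d) (p (s + d)) := by
    intro d
    induction d with
    | zero => simp [hps]
    | succ d ih =>
      intro hd
      have hd' : d < L := by omega
      have h1 := ih (le_of_lt hd')
      have hedge := hpe d hd'
      have hlb := hWlb _ _ _ hedge
      have h2 : W (s + d) (p (s + d + 1)) (p (s + d)) * v (s + d) (p (s + d)) ≤
          v (s + d + 1) (p (s + d + 1)) := by
        rw [hv (s + d), mulVec_apply]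
        exact Finset.single_le_sum
          (f := fun k => W (s + d) (p (s + d + 1)) k * v (s + d) k)
          (fun k _ => mul_nonneg (hW0 _ _ _) (hnn d k)) (Finset.mem_univ _)
      have h3 : ((n:ℝ)⁻¹) * (((n:ℝ)⁻¹) ^ d * v s j) ≤
          W (s + d) (p (s + d + 1)) (p (s + d)) * v (s + d) (p (s + d)) := by
        have hnni : (0:ℝ) ≤ (n:ℝ)⁻¹ := inv_nonneg.mpr (Nat.cast_nonneg n)
        exact mul_le_mul hlb h1 (mul_nonneg (pow_nonneg hnni d) (hvnn j))
          (le_trans hnni hlb)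
      rw [show s + (d + 1) = s + d + 1 by omega]
      calc ((n:ℝ)⁻¹) ^ (d + 1) * v s j = ((n:ℝ)⁻¹) * (((n:ℝ)⁻¹) ^ d * v s j) := by ring
        _ ≤ _ := le_trans h3 h2
  have := key L le_rfl
  rwa [hpL] at this

lemma mulVec_sub_smul (A : Matrix (Fin n) (Fin n) ℝ) (u v : Fin n → ℝ) (a : ℝ) (k : Fin n) :
    A.mulVec (fun j => u j - a * v j) k = A.mulVec u k - a * A.mulVec v k := by
  simp only [mulVec_apply, mul_sub, Finset.sum_sub_distrib, Finset.mul_sum]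
  congr 1
  exact Finset.sum_congr rfl fun j _ => by ring

lemma mulVec_smul_sub (A : Matrix (Fin n) (Fin n) ℝ) (u v : Fin n → ℝ) (b : ℝ) (k : Fin n) :
    A.mulVec (fun j => b * u j - v j) k = b * A.mulVec u k - A.mulVec v k := by
  simp only [mulVec_apply, mul_sub, Finset.sum_sub_distrib, Finset.mul_sum]
  congr 1
  exact Finset.sum_congr rfl fun j _ => by ring

lemma nonneg_propagate {W : ℕ → Matrix (Fin n) (Fin n) ℝ}
    (hW0 : ∀ t i j, 0 ≤ W t i j) (v : ℕ → Fin n → ℝ)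
    (hv : ∀ r, v (r + 1) = (W r).mulVec (v r)) (s : ℕ) (h : ∀ k, 0 ≤ v s k) :
    ∀ t, s ≤ t → ∀ k, 0 ≤ v t k := by
  intro t
  induction t with
  | zero => intro hst; rw [Nat.le_zero.mp hst] at h; exact h
  | succ t ih =>
    intro hst
    rcases Nat.le_succ_iff.mp hst with h' | rfl
    · rw [hv t]
      exact mulVec_nonneg (hW0 t) (ih h')
    · exact h

lemma window_gain
    (hn : 2 ≤ n) {B : ℕ} (hB : 1 ≤ B)
    {P : ℕ → Matrix (Fin n) (Fin n) ℝ}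
    (hPnn : ∀ t i j, 0 ≤ P t i j)
    (hPirr : ∀ w : ℕ, IrreducibleMat (∑ t' ∈ Finset.Ico (w * B) ((w + 1) * B), P t'))
    {W : ℕ → Matrix (Fin n) (Fin n) ℝ}
    (hW0 : ∀ t i j, 0 ≤ W t i j)
    (hWlb : ∀ t i j, W t i j ≠ 0 → (n:ℝ)⁻¹ ≤ W t i j)
    (hWdiag : ∀ t b, W t b b ≠ 0)
    {m : ℕ}
    (hgoodm : ∀ t, m * (n * B) ≤ t → t < (m + 1) * (n * B) →
      ∀ i j, P t i j ≠ 0 → W t i j ≠ 0)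
    (v : ℕ → Fin n → ℝ) (hv : ∀ r, v (r + 1) = (W r).mulVec (v r))
    (hvnn : ∀ k, 0 ≤ v (m * (n * B)) k) :
    ∀ k, ((n:ℝ)⁻¹) ^ (n * B) * ((∑ j, v (m * (n * B)) j) / n) ≤ v (m * (n * B) + n * B) k := by
  intro k
  set s := m * (n * B) with hs
  have hne : Nonempty (Fin n) := ⟨⟨0, by omega⟩⟩
  have hn0 : (0:ℝ) < n := by
    have : 0 < n := by omega
    exact_mod_cast this
  -- choose a coordinate at least the average
  have hex : ∃ j ∈ Finset.univ, (∑ j, v s j) / n ≤ v s j := by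
    apply Finset.exists_le_of_sum_le (Finset.univ_nonempty)
    rw [Finset.sum_const, Finset.card_univ, Fintype.card_fin, nsmul_eq_mul]
    rw [mul_div_cancel₀]
    exact ne_of_gt hn0
  obtain ⟨jstar, _, hjstar⟩ := hex
  have hreach : ReachP W s jstar (n * B) k := reach_univ hn hB hPnn hPirr hWdiag hgoodm jstar k
  have hpath := reachP_path hreach
  have hlb := window_lower_bound hW0 hWlb v hv s (n * B) hvnn hpath
  refine le_trans ?_ hlb
  apply mul_le_mul_of_nonneg_left hjstar
  positivity

lemma det_convergence
    (hn : 2 ≤ n) {B : ℕ} (hB : 1 ≤ B)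
    {P : ℕ → Matrix (Fin n) (Fin n) ℝ}
    (hPnn : ∀ t i j, 0 ≤ P t i j)
    (hPirr : ∀ w : ℕ, IrreducibleMat (∑ t' ∈ Finset.Ico (w * B) ((w + 1) * B), P t'))
    {W : ℕ → Matrix (Fin n) (Fin n) ℝ}
    (hW0 : ∀ t i j, 0 ≤ W t i j)
    (hWcol : ∀ t j, ∑ i, W t i j = 1)
    (hWlb : ∀ t i j, W t i j ≠ 0 → (n:ℝ)⁻¹ ≤ W t i j)
    (hWdiag : ∀ t b, W t b b ≠ 0)
    (hgood : ∀ K : ℕ, ∃ m, K ≤ m ∧ ∀ t, m * (n * B) ≤ t → t < (m + 1) * (n * B) →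
      ∀ i j, P t i j ≠ 0 → W t i j ≠ 0)
    (x0 : Fin n → ℝ) (i : Fin n) :
    Filter.Tendsto (fun t => pushIter W x0 t i / pushIter W (fun _ => 1) t i)
      Filter.atTop (nhds ((∑ j, x0 j) / n)) := by
  have hnpos : 0 < n := by omega
  have hne : Nonempty (Fin n) := ⟨⟨0, hnpos⟩⟩
  have hn0 : (0:ℝ) < n := by exact_mod_cast hnpos
  have hnB : 1 ≤ n * B := by
    calc 1 ≤ 1 * 1 := by omega
      _ ≤ n * B := Nat.mul_le_mul (by omega) hB
  set x : ℕ → Fin n → ℝ := pushIter W x0 with hx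
  set y : ℕ → Fin n → ℝ := pushIter W (fun _ => 1) with hy
  have hWdpos : ∀ t b, 0 < W t b b := fun t b =>
    lt_of_lt_of_le (by positivity) (hWlb t b b (hWdiag t b))
  have hypos : ∀ t k, 0 < y t k :=
    pushIter_pos hW0 hWdpos (fun _ => one_pos)
  have hysum : ∀ t, ∑ k, y t k = n := by
    intro t
    rw [hy, sum_pushIter hWcol]
    simp
  have hxsum : ∀ t, ∑ k, x t k = ∑ k, x0 k := fun t => sum_pushIter hWcol t
  have hyub : ∀ t k, y t k ≤ n := by
    intro t k
    have h1 : y t k ≤ ∑ k', y t k' :=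
      Finset.single_le_sum (fun k' _ => (hypos t k').le) (Finset.mem_univ k)
    rw [hysum t] at h1
    exact h1
  set avg : ℝ := (∑ j, x0 j) / n with havg
  have hnavg : (n:ℝ) * avg = ∑ j, x0 j := by
    rw [havg, mul_div_cancel₀]
    exact ne_of_gt hn0
  set Lo : ℕ → ℝ := fun t => Finset.univ.inf' Finset.univ_nonempty (fun k => x t k / y t k)
    with hLo
  set Hi : ℕ → ℝ := fun t => Finset.univ.sup' Finset.univ_nonempty (fun k => x t k / y t k)
    with hHi
  have hLole : ∀ t k, Lo t ≤ x t k / y t k := by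
    intro t k
    rw [hLo]
    exact Finset.inf'_le _ (Finset.mem_univ k)
  have hHige : ∀ t k, x t k / y t k ≤ Hi t := by
    intro t k
    rw [hHi]
    exact Finset.le_sup' (f := fun k => x t k / y t k) (Finset.mem_univ k)
  have hLomul : ∀ t k, Lo t * y t k ≤ x t k := by
    intro t k
    rw [← le_div_iff₀ (hypos t k)]
    exact hLole t k
  have hHimul : ∀ t k, x t k ≤ Hi t * y t k := by
    intro t k
    rw [← div_le_iff₀ (hypos t k)]
    exact hHige t k
  -- evolution of x - a*y
  have hvev : ∀ a : ℝ, ∀ r, (fun k => x (r+1) k - a * y (r+1) k)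
      = (W r).mulVec (fun k => x r k - a * y r k) := by
    intro a r
    funext k
    rw [mulVec_sub_smul]
    rfl
  have hwev : ∀ b : ℝ, ∀ r, (fun k => b * y (r+1) k - x (r+1) k)
      = (W r).mulVec (fun k => b * y r k - x r k) := by
    intro b r
    funext k
    rw [mulVec_smul_sub]
    rfl
  -- monotonicity of Lo and Hi
  have hLomono : ∀ s t, s ≤ t → Lo s ≤ Lo t := by
    intro s t hst
    have hprop := nonneg_propagate hW0 (fun r k => x r k - Lo s * y r k)
      (fun r => hvev (Lo s) r) s (fun k => sub_nonneg.mpr (hLomul s k)) t hst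
    apply Finset.le_inf'
    intro k _
    rw [le_div_iff₀ (hypos t k)]
    have h5 : 0 ≤ x t k - Lo s * y t k := hprop k
    linarith
  have hHimono : ∀ s t, s ≤ t → Hi t ≤ Hi s := by
    intro s t hst
    have hprop := nonneg_propagate hW0 (fun r k => Hi s * y r k - x r k)
      (fun r => hwev (Hi s) r) s (fun k => sub_nonneg.mpr (hHimul s k)) t hst
    apply Finset.sup'_le
    intro k _
    rw [div_le_iff₀ (hypos t k)]
    have h5 : 0 ≤ Hi s * y t k - x t k := hprop k
    linarith
  have hLoavg : ∀ t, Lo t ≤ avg := by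
    intro t
    have h1 : ∑ k, Lo t * y t k ≤ ∑ k, x t k :=
      Finset.sum_le_sum fun k _ => hLomul t k
    rw [← Finset.mul_sum, hysum t, hxsum t, ← hnavg] at h1
    nlinarith
  have hHiavg : ∀ t, avg ≤ Hi t := by
    intro t
    have h1 : ∑ k, x t k ≤ ∑ k, Hi t * y t k :=
      Finset.sum_le_sum fun k _ => hHimul t k
    rw [← Finset.mul_sum, hysum t, hxsum t, ← hnavg] at h1
    nlinarith
  set c : ℝ := ((n:ℝ)⁻¹) ^ (n * B + 1) with hc
  have hcpos : 0 < c := by positivity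
  have hcle1 : c ≤ 1 := pow_le_one₀ (by positivity) (inv_le_one_of_one_le₀ (by exact_mod_cast hnpos))
  have hcn : c * n = ((n:ℝ)⁻¹) ^ (n * B) := by
    rw [hc, pow_succ]
    field_simp
  -- contraction over a good window
  have hcontract : ∀ m : ℕ, (∀ t, m * (n * B) ≤ t → t < (m + 1) * (n * B) →
      ∀ i' j', P t i' j' ≠ 0 → W t i' j' ≠ 0) →
      Hi (m * (n * B) + n * B) - Lo (m * (n * B) + n * B)
        ≤ (1 - c) * (Hi (m * (n * B)) - Lo (m * (n * B))) := by
    intro m hgoodm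
    set s := m * (n * B) with hs
    set L := n * B with hL
    have hlow : Lo s + c * (avg - Lo s) ≤ Lo (s + L) := by
      have hgain := window_gain hn hB hPnn hPirr hW0 hWlb hWdiag hgoodm
        (fun r k => x r k - Lo s * y r k) (fun r => hvev (Lo s) r)
        (fun k => sub_nonneg.mpr (hLomul s k))
      have hsumv : ∑ j, (x s j - Lo s * y s j) = (n:ℝ) * (avg - Lo s) := by
        rw [Finset.sum_sub_distrib, ← Finset.mul_sum, hysum s, hxsum s, ← hnavg]
        ring
      apply Finset.le_inf'
      intro k _
      have h1 := hgain k
      rw [hsumv, mul_div_cancel_left₀ _ (ne_of_gt hn0)] at h1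
      rw [le_div_iff₀ (hypos (s + L) k)]
      have hya := hyub (s + L) k
      have havgL := hLoavg s
      have hnn : 0 ≤ c * (avg - Lo s) := mul_nonneg hcpos.le (sub_nonneg.mpr havgL)
      have h3 : c * (avg - Lo s) * y (s + L) k ≤ ((n:ℝ)⁻¹) ^ L * (avg - Lo s) := by
        rw [← hcn]
        calc c * (avg - Lo s) * y (s + L) k ≤ c * (avg - Lo s) * n :=
              mul_le_mul_of_nonneg_left hya hnn
          _ = c * n * (avg - Lo s) := by ring
      nlinarith [h1, h3]
    have hhigh : Hi (s + L) ≤ Hi s - c * (Hi s - avg) := by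
      have hgain := window_gain hn hB hPnn hPirr hW0 hWlb hWdiag hgoodm
        (fun r k => Hi s * y r k - x r k) (fun r => hwev (Hi s) r)
        (fun k => sub_nonneg.mpr (hHimul s k))
      have hsumv : ∑ j, (Hi s * y s j - x s j) = (n:ℝ) * (Hi s - avg) := by
        rw [Finset.sum_sub_distrib, ← Finset.mul_sum, hysum s, hxsum s, ← hnavg]
        ring
      apply Finset.sup'_le
      intro k _
      have h1 := hgain k
      rw [hsumv, mul_div_cancel_left₀ _ (ne_of_gt hn0)] at h1
      rw [div_le_iff₀ (hypos (s + L) k)]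
      have hya := hyub (s + L) k
      have havgH := hHiavg s
      have hnn : 0 ≤ c * (Hi s - avg) := mul_nonneg hcpos.le (sub_nonneg.mpr havgH)
      have h3 : c * (Hi s - avg) * y (s + L) k ≤ ((n:ℝ)⁻¹) ^ L * (Hi s - avg) := by
        rw [← hcn]
        calc c * (Hi s - avg) * y (s + L) k ≤ c * (Hi s - avg) * n :=
              mul_le_mul_of_nonneg_left hya hnn
          _ = c * n * (Hi s - avg) := by ring
      nlinarith [h1, h3]
    have hLH := hLoavg s
    have hHA := hHiavg s
    nlinarith [hlow, hhigh]
  -- the gap tends to zero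
  set gap : ℕ → ℝ := fun t => Hi t - Lo t with hgap
  have hgapnn : ∀ t, 0 ≤ gap t := fun t => by
    have := hLoavg t; have := hHiavg t
    simp only [hgap]; linarith
  have hgapanti : Antitone gap := by
    intro s t hst
    have := hLomono s t hst
    have := hHimono s t hst
    simp only [hgap]; linarith
  have hclaim : ∀ K : ℕ, ∃ T, gap T ≤ (1 - c) ^ K * gap 0 := by
    intro K
    induction K with
    | zero => exact ⟨0, by simp⟩
    | succ K ih =>
      obtain ⟨T, hT⟩ := ih
      obtain ⟨m, hmT, hgoodm⟩ := hgood T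
      have hTs : T ≤ m * (n * B) := le_trans hmT (Nat.le_mul_of_pos_right m (by omega))
      have h1 : gap (m * (n * B)) ≤ gap T := hgapanti hTs
      have h2 := hcontract m hgoodm
      refine ⟨m * (n * B) + n * B, ?_⟩
      have h1c : 0 ≤ 1 - c := by linarith
      calc gap (m * (n * B) + n * B) ≤ (1 - c) * gap (m * (n * B)) := h2
        _ ≤ (1 - c) * ((1 - c) ^ K * gap 0) :=
            mul_le_mul_of_nonneg_left (le_trans h1 hT) h1c
        _ = (1 - c) ^ (K + 1) * gap 0 := by ring
  have hgap0 : Filter.Tendsto gap Filter.atTop (nhds 0) := by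
    have hbdd : BddBelow (Set.range gap) := ⟨0, fun r ⟨t, ht⟩ => ht ▸ hgapnn t⟩
    have htend := tendsto_atTop_ciInf hgapanti hbdd
    have hiinf : ⨅ t, gap t = 0 := by
      apply le_antisymm
      · have hpow : Filter.Tendsto (fun K : ℕ => (1 - c) ^ K * gap 0)
            Filter.atTop (nhds 0) := by
          have := (tendsto_pow_atTop_nhds_zero_of_lt_one (by linarith : (0:ℝ) ≤ 1 - c)
            (by linarith : (1:ℝ) - c < 1)).mul_const (gap 0)
          simpa using this
        apply ge_of_tendsto hpow
        apply Filter.Eventually.of_forall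
        intro K
        obtain ⟨T, hT⟩ := hclaim K
        exact le_trans (ciInf_le hbdd T) hT
      · exact le_ciInf hgapnn
    rwa [hiinf] at htend
  -- squeeze
  have hlb : ∀ t, avg - gap t ≤ x t i / y t i := by
    intro t
    have h1 := hLole t i
    have h2 := hHiavg t
    simp only [hgap]
    linarith
  have hub : ∀ t, x t i / y t i ≤ avg + gap t := by
    intro t
    have h1 := hHige t i
    have h2 := hLoavg t
    simp only [hgap]
    linarith
  have hl : Filter.Tendsto (fun t => avg - gap t) Filter.atTop (nhds avg) := by
    simpa using tendsto_const_nhds.sub hgap0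
  have hu : Filter.Tendsto (fun t => avg + gap t) Filter.atTop (nhds avg) := by
    simpa using tendsto_const_nhds.add hgap0
  exact tendsto_of_tendsto_of_tendsto_of_le_of_le hl hu hlb hub

end PSAux

/-- The random column-stochastic matrix built from the Bernoulli variables `R`:
`W(t)(ω)_{ij} = R_{ij}(t)(ω) / ∑_k R_{kj}(t)(ω)`. -/
noncomputable def Wof {n : ℕ} {Ω : Type*} (R : ℕ → Fin n → Fin n → Ω → ℝ)
    (t : ℕ) (ω : Ω) : Matrix (Fin n) (Fin n) ℝ :=
  fun i j => R t i j ω / ∑ k, R t k j ω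

/-- In the random model, push-sum achieves average consensus almost
surely: for every initial state `x(0)` and every `i`, a.s. `z_i(t) → x̄`. -/
theorem random_model_average_consensus
    {Ω : Type*} [MeasurableSpace Ω] (μ : MeasureTheory.Measure Ω)
    [MeasureTheory.IsProbabilityMeasure μ]
    {n : ℕ} (hn : 2 ≤ n) (ε : ℝ) (hε : 0 < ε) (B : ℕ) (hB : 1 ≤ B)
    (P : ℕ → Matrix (Fin n) (Fin n) ℝ)
    (hP01 : ∀ t i j, P t i j ∈ Set.Icc (0:ℝ) 1)
    (hPdiag : ∀ t i, P t i i = 1)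
    (hPeps : ∀ t i j, P t i j ≠ 0 → ε ≤ P t i j)
    (hPirr : ∀ t : ℕ, IrreducibleMat (∑ t' ∈ Finset.Ico (t * B) ((t + 1) * B), P t'))
    (R : ℕ → Fin n → Fin n → Ω → ℝ)
    (hRmeas : ∀ t i j, Measurable (R t i j))
    (hR01 : ∀ t i j ω, R t i j ω = 0 ∨ R t i j ω = 1)
    (hRP : ∀ t i j, μ {ω | R t i j ω = 1} = ENNReal.ofReal (P t i j))
    (hindep : ProbabilityTheory.iIndepFun
      (fun (p : ℕ × Fin n × Fin n) ω => R p.1 p.2.1 p.2.2 ω) μ)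
    :
    ∀ (x0 : Fin n → ℝ) (i : Fin n), ∀ᵐ ω ∂μ,
      Filter.Tendsto
        (fun t => pushIter (fun s => Wof R s ω) x0 t i
            / pushIter (fun s => Wof R s ω) (fun _ => 1) t i)
        Filter.atTop (nhds ((∑ j, x0 j) / n)) := by
  classical
  intro x0 i
  have hnpos : 0 < n := by omega
  have hPnn : ∀ t i' j', 0 ≤ P t i' j' := fun t i' j' => (hP01 t i' j').1
  -- almost surely all self-loop variables equal 1
  have hG : ∀ᵐ ω ∂μ, ∀ (t : ℕ) (j : Fin n), R t j j ω = 1 := by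
    rw [MeasureTheory.ae_all_iff]
    intro t
    rw [MeasureTheory.ae_all_iff]
    intro j
    have hmeas : MeasurableSet {ω | R t j j ω = 1} := by
      have : {ω | R t j j ω = 1} = (R t j j) ⁻¹' {1} := by
        ext ω; simp
      rw [this]
      exact (hRmeas t j j) (measurableSet_singleton 1)
    have h1 : μ {ω | R t j j ω = 1} = 1 := by
      rw [hRP, hPdiag]; simp
    rw [MeasureTheory.ae_iff]
    have hc : {ω | ¬ R t j j ω = 1} = {ω | R t j j ω = 1}ᶜ := rfl
    rw [hc, measure_compl hmeas (measure_ne_top μ _), h1, measure_univ, tsub_self]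
  -- the good events
  set f : ℕ × Fin n × Fin n → Ω → ℝ := fun p ω => R p.1 p.2.1 p.2.2 ω with hf
  set blk : ℕ → Finset (ℕ × Fin n × Fin n) := fun m =>
    ((Finset.Ico (m * (n * B)) ((m + 1) * (n * B))) ×ˢ
      (Finset.univ : Finset (Fin n × Fin n))).filter
      (fun p => P p.1 p.2.1 p.2.2 ≠ 0) with hblk
  set E : ℕ → Set Ω := fun m => ⋂ p ∈ blk m, f p ⁻¹' ({1} : Set ℝ) with hE
  have hEmeas : ∀ m, MeasurableSet (E m) := by
    intro m
    apply MeasurableSet.biInter ((blk m).countable_toSet)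
    intro p _
    exact (hRmeas p.1 p.2.1 p.2.2) (measurableSet_singleton 1)
  have hprod : ∀ S : Finset (ℕ × Fin n × Fin n),
      μ (⋂ p ∈ S, f p ⁻¹' ({1} : Set ℝ)) = ∏ p ∈ S, μ (f p ⁻¹' ({1} : Set ℝ)) := by
    intro S
    exact hindep.measure_inter_preimage_eq_mul S (sets := fun _ => ({1} : Set ℝ))
      (fun p _ => measurableSet_singleton 1)
  have hμf : ∀ p : ℕ × Fin n × Fin n,
      μ (f p ⁻¹' ({1} : Set ℝ)) = ENNReal.ofReal (P p.1 p.2.1 p.2.2) := by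
    intro p
    have : f p ⁻¹' ({1} : Set ℝ) = {ω | R p.1 p.2.1 p.2.2 ω = 1} := by
      ext ω; simp [hf]
    rw [this, hRP]
  have hEμ : ∀ m, μ (E m) = ∏ p ∈ blk m, ENNReal.ofReal (P p.1 p.2.1 p.2.2) := by
    intro m
    rw [hE]
    rw [hprod (blk m)]
    exact Finset.prod_congr rfl fun p _ => hμf p
  -- lower bound on the probability of the good events
  set δ : ENNReal := ENNReal.ofReal ε ^ (n * B * (n * n)) with hδ
  have hε1 : ε ≤ 1 := by
    have h := hPeps 0 ⟨0, hnpos⟩ ⟨0, hnpos⟩ (by rw [hPdiag]; norm_num)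
    rwa [hPdiag] at h
  have hδle : ∀ m, δ ≤ μ (E m) := by
    intro m
    rw [hEμ m]
    have h1 : ∏ p ∈ blk m, (ENNReal.ofReal ε) ≤
        ∏ p ∈ blk m, ENNReal.ofReal (P p.1 p.2.1 p.2.2) := by
      apply Finset.prod_le_prod'
      intro p hp
      rw [hblk, Finset.mem_filter] at hp
      exact ENNReal.ofReal_le_ofReal (hPeps _ _ _ hp.2)
    rw [Finset.prod_const] at h1
    refine le_trans ?_ h1
    apply pow_le_pow_right_of_le_one' (ENNReal.ofReal_le_one.mpr hε1)
    calc (blk m).card ≤ ((Finset.Ico (m * (n * B)) ((m + 1) * (n * B))) ×ˢ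
        (Finset.univ : Finset (Fin n × Fin n))).card := Finset.card_filter_le _ _
      _ = (n * B) * (n * n) := by
          rw [Finset.card_product, Nat.card_Ico]
          simp [Fintype.card_fin]
          ring_nf
          omega
  have hδ0 : δ ≠ 0 := by
    apply pow_ne_zero
    simp [ENNReal.ofReal_eq_zero]
    exact hε
  have htsum : (∑' m, μ (E m)) = ⊤ := by
    rw [← top_le_iff]
    calc (⊤ : ENNReal) = ∑' _ : ℕ, δ := (ENNReal.tsum_const_eq_top_of_ne_zero hδ0).symm
      _ ≤ ∑' m, μ (E m) := ENNReal.tsum_le_tsum hδle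
  -- independence of the good events
  have hdisj : ∀ m m' : ℕ, m ≠ m' → Disjoint (blk m) (blk m') := by
    intro m m' hmm
    rw [Finset.disjoint_left]
    intro p hp hp'
    rw [hblk, Finset.mem_filter, Finset.mem_product, Finset.mem_Ico] at hp hp'
    have h1 := hp.1.1
    have h2 := hp'.1.1
    rcases Nat.lt_or_ge m m' with h | h
    · have : (m + 1) * (n * B) ≤ m' * (n * B) := Nat.mul_le_mul_right _ h
      omega
    · have hlt : m' < m := by omega
      have : (m' + 1) * (n * B) ≤ m * (n * B) := Nat.mul_le_mul_right _ hlt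
      omega
  have hiid : ProbabilityTheory.iIndepSet E μ := by
    rw [ProbabilityTheory.iIndepSet_iff_meas_biInter hEmeas]
    intro S
    have h1 : (⋂ m ∈ S, E m) = ⋂ p ∈ S.biUnion blk, f p ⁻¹' ({1} : Set ℝ) := by
      rw [Finset.set_biInter_biUnion]
    rw [h1, hprod, Finset.prod_biUnion]
    · exact Finset.prod_congr rfl fun m _ => (hEμ m).symm ▸ (Finset.prod_congr rfl
        fun p _ => hμf p).symm ▸ rfl
    · intro m _ m' _ hmm
      exact hdisj m m' hmm
  have hBC : μ (Filter.limsup E Filter.atTop) = 1 :=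
    ProbabilityTheory.measure_limsup_eq_one hEmeas hiid htsum
  have hae2 : ∀ᵐ ω ∂μ, ω ∈ Filter.limsup E Filter.atTop := by
    rw [MeasureTheory.ae_iff]
    have hc : {ω | ¬ ω ∈ Filter.limsup E Filter.atTop}
        = (Filter.limsup E Filter.atTop)ᶜ := rfl
    rw [hc, measure_compl (MeasurableSet.measurableSet_limsup hEmeas)
      (measure_ne_top μ _), hBC, measure_univ, tsub_self]
  -- conclude pointwise
  filter_upwards [hG, hae2] with ω hGω hLω
  set Wn : ℕ → Matrix (Fin n) (Fin n) ℝ := fun s => Wof R s ω with hWn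
  have hRnn : ∀ t i' j', 0 ≤ R t i' j' ω := by
    intro t i' j'
    rcases hR01 t i' j' ω with h | h <;> rw [h] <;> norm_num
  have hRub : ∀ t i' j', R t i' j' ω ≤ 1 := by
    intro t i' j'
    rcases hR01 t i' j' ω with h | h <;> rw [h] <;> norm_num
  have hSlb : ∀ t j', (1:ℝ) ≤ ∑ k, R t k j' ω := by
    intro t j'
    have h1 : R t j' j' ω ≤ ∑ k, R t k j' ω :=
      Finset.single_le_sum (fun k _ => hRnn t k j') (Finset.mem_univ j')
    rw [hGω t j'] at h1
    exact h1
  have hSub : ∀ t j', (∑ k, R t k j' ω) ≤ n := by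
    intro t j'
    calc ∑ k, R t k j' ω ≤ ∑ _k : Fin n, (1:ℝ) :=
          Finset.sum_le_sum fun k _ => hRub t k j'
      _ = n := by simp
  have hSpos : ∀ t j', (0:ℝ) < ∑ k, R t k j' ω := fun t j' =>
    lt_of_lt_of_le one_pos (hSlb t j')
  have hW0 : ∀ t i' j', 0 ≤ Wn t i' j' := by
    intro t i' j'
    exact div_nonneg (hRnn t i' j') (hSpos t j').le
  have hWcol : ∀ t j', ∑ i', Wn t i' j' = 1 := by
    intro t j'
    show (∑ i', R t i' j' ω / ∑ k, R t k j' ω) = 1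
    rw [← Finset.sum_div]
    exact div_self (ne_of_gt (hSpos t j'))
  have hWlb : ∀ t i' j', Wn t i' j' ≠ 0 → (n:ℝ)⁻¹ ≤ Wn t i' j' := by
    intro t i' j' hne
    have hR1 : R t i' j' ω = 1 := by
      rcases hR01 t i' j' ω with h | h
      · exfalso
        apply hne
        show R t i' j' ω / _ = 0
        rw [h, zero_div]
      · exact h
    show (n:ℝ)⁻¹ ≤ R t i' j' ω / ∑ k, R t k j' ω
    rw [hR1, inv_eq_one_div]
    exact one_div_le_one_div_of_le (hSpos t j') (hSub t j')
  have hWdiag : ∀ t j', Wn t j' j' ≠ 0 := by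
    intro t j'
    show R t j' j' ω / _ ≠ 0
    rw [hGω t j']
    exact one_div_ne_zero (ne_of_gt (hSpos t j'))
  have hgood : ∀ K : ℕ, ∃ m, K ≤ m ∧ ∀ t, m * (n * B) ≤ t → t < (m + 1) * (n * B) →
      ∀ i' j', P t i' j' ≠ 0 → Wn t i' j' ≠ 0 := by
    intro K
    have hfreq := Filter.mem_limsup_iff_frequently_mem.mp hLω
    obtain ⟨m, hmK, hmem⟩ := (Filter.frequently_atTop.mp hfreq) K
    refine ⟨m, hmK, ?_⟩
    intro t ht1 ht2 i' j' hP
    have hpmem : (t, i', j') ∈ blk m := by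
      rw [hblk, Finset.mem_filter, Finset.mem_product]
      exact ⟨⟨Finset.mem_Ico.mpr ⟨ht1, ht2⟩, Finset.mem_univ _⟩, hP⟩
    simp only [hE] at hmem
    have hR1 : R t i' j' ω = 1 := by
      have h := Set.mem_iInter₂.mp hmem (t, i', j') hpmem
      simpa [hf] using h
    show R t i' j' ω / _ ≠ 0
    rw [hR1]
    exact one_div_ne_zero (ne_of_gt (hSpos t j'))
  exact PSAux.det_convergence hn hB hPnn hPirr hW0 hWcol hWlb hWdiag hgood x0 i
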